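/- Let f be given by an admissible representation f(z) = (−2π/(a·log z))·(1 + Σ_{n≥1} Φ_n(z)/(log z)^n). Then there exists ε > 0 such that for every real x ∈ (0, ε) the value f(x) is real, and f restricted to (0, ε) is strictly increasing (in particular one-to-one), so that f maps (0, ε) bijectively onto a real interval (0, R') with f(x) → 0 as x → 0⁺. -/

import Mathlib

open Complex Filter Topology

/-- `Phi c n z = Σ_{k≥0} c_{n,k} z^k`. -/
noncomputable def Phi (c : ℕ → ℕ → ℝ) (n : ℕ) (z : ℂ) : ℂ :=
  ∑' k : ℕ, (c n k : ℂ) * z ^ k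

/-- Termwise derivative `Σ_{k≥1} k·c_{n,k} z^{k-1}`. -/
noncomputable def PhiD (c : ℕ → ℕ → ℝ) (n : ℕ) (z : ℂ) : ℂ :=
  ∑' k : ℕ, ((k + 1 : ℕ) : ℂ) * (c n (k + 1) : ℂ) * z ^ k

/-- `f(z) = (−2π/(a·log z))·(1 + Σ_{n≥1} Φ_n(z)/(log z)^n)`, where `Complex.log`
is the branch with `log i = iπ/2`, continuous on the closed upper half-plane minus `0`. -/
noncomputable def fRep (a : ℝ) (c : ℕ → ℕ → ℝ) (z : ℂ) : ℂ :=
  (-(2 * (Real.pi : ℂ)) / ((a : ℂ) * Complex.log z)) *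
    (1 + ∑' n : ℕ, Phi c (n + 1) z / (Complex.log z) ^ (n + 1))

/-- Admissibility of the representation `fRep a c`. -/
def Admissible (a : ℝ) (c : ℕ → ℕ → ℝ) : Prop :=
  0 < a ∧
  (∃ B : ℝ, ∀ n : ℕ, 1 ≤ n → ∀ k : ℕ, 1 ≤ k → |c n k| ^ ((1 : ℝ) / (k : ℝ)) ≤ B) ∧
  (∃ r > (0 : ℝ), ∃ M > (0 : ℝ), ∀ n : ℕ, 1 ≤ n → ∀ z : ℂ,
      ‖z‖ ≤ r → 0 ≤ z.im → ‖Phi c n z‖ ≤ M ^ n) ∧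
  (∃ r > (0 : ℝ), ∃ M > (0 : ℝ), ∀ n : ℕ, 1 ≤ n → ∀ z : ℂ,
      ‖z‖ ≤ r → 0 ≤ z.im → ‖PhiD c n z‖ ≤ M ^ n) ∧
  c 1 0 ≠ 0

noncomputable def phiR (c : ℕ → ℕ → ℝ) (n : ℕ) (x : ℝ) : ℝ :=
  ∑' k : ℕ, c n k * x ^ k

noncomputable def psiR (c : ℕ → ℕ → ℝ) (n : ℕ) (x : ℝ) : ℝ :=
  ∑' k : ℕ, ((k + 1 : ℕ) : ℝ) * c n (k + 1) * x ^ k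

noncomputable def SR (c : ℕ → ℕ → ℝ) (x : ℝ) : ℝ :=
  ∑' n : ℕ, phiR c (n + 1) x / (Real.log x) ^ (n + 1)

noncomputable def RR (a : ℝ) (c : ℕ → ℕ → ℝ) (x : ℝ) : ℝ :=
  (2 * Real.pi / a) * ((1 + SR c x) / (-Real.log x))

lemma Phi_real (c : ℕ → ℕ → ℝ) (n : ℕ) (x : ℝ) : Phi c n (x : ℂ) = ((phiR c n x : ℝ) : ℂ) := by
  rw [Phi, phiR, Complex.ofReal_tsum]
  congr 1; ext k; push_cast; ring

lemma PhiD_real (c : ℕ → ℕ → ℝ) (n : ℕ) (x : ℝ) : PhiD c n (x : ℂ) = ((psiR c n x : ℝ) : ℂ) := by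
  rw [PhiD, psiR, Complex.ofReal_tsum]
  congr 1; ext k; push_cast; ring

lemma coeff_le {c : ℕ → ℕ → ℝ} {B : ℝ}
    (hB : ∀ n : ℕ, 1 ≤ n → ∀ k : ℕ, 1 ≤ k → |c n k| ^ ((1 : ℝ) / (k : ℝ)) ≤ B)
    {n k : ℕ} (hn : 1 ≤ n) (hk : 1 ≤ k) : |c n k| ≤ (max B 1) ^ k := by
  have h := hB n hn k hk
  have hk0 : (k : ℝ) ≠ 0 := by positivity
  have h1 : |c n k| = (|c n k| ^ ((1 : ℝ) / (k : ℝ))) ^ (k : ℕ) := by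
    rw [← Real.rpow_natCast (|c n k| ^ ((1 : ℝ) / (k : ℝ))) k, ← Real.rpow_mul (abs_nonneg _),
      one_div, inv_mul_cancel₀ hk0, Real.rpow_one]
  rw [h1]
  exact pow_le_pow_left₀ (Real.rpow_nonneg (abs_nonneg _) _) (h.trans (le_max_left _ _)) k

lemma abs_tsum_le {f g : ℕ → ℝ} (h : ∀ n, |f n| ≤ g n) (hg : Summable g) :
    |∑' n, f n| ≤ ∑' n, g n := by
  have hf : Summable f := Summable.of_norm_bounded hg
    (fun n => (Real.norm_eq_abs (f n)).le.trans ((Real.norm_eq_abs (f n)) ▸ h n))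
  have hfa : Summable fun n => ‖f n‖ := by simpa only [Real.norm_eq_abs] using hf.abs
  have h2 := norm_tsum_le_tsum_norm hfa
  rw [Real.norm_eq_abs] at h2
  refine h2.trans ?_
  refine (Summable.tsum_le_tsum (fun n => ?_) hfa hg)
  rw [Real.norm_eq_abs]; exact h n

lemma succ_le_two_pow (n : ℕ) : ((n : ℝ) + 1) ≤ 2 ^ n := by
  have := Nat.lt_two_pow_self (n := n)
  exact_mod_cast Nat.succ_le_of_lt this

set_option maxHeartbeats 1000000 in
/-- Lemma 1: an admissible representation is a one-to-one (strictly increasing)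
parametrization of a real interval `(0, R')` for small `x > 0`. -/
theorem stmt2 (a : ℝ) (c : ℕ → ℕ → ℝ) (hadm : Admissible a c) :
    ∃ ε > (0 : ℝ),
      (∀ x ∈ Set.Ioo (0 : ℝ) ε, (fRep a c (x : ℂ)).im = 0) ∧
      StrictMonoOn (fun x : ℝ => (fRep a c (x : ℂ)).re) (Set.Ioo 0 ε) ∧
      (∃ R' > (0 : ℝ),
        Set.BijOn (fun x : ℝ => (fRep a c (x : ℂ)).re) (Set.Ioo 0 ε) (Set.Ioo 0 R')) ∧
      Filter.Tendsto (fun x : ℝ => fRep a c (x : ℂ)) (nhdsWithin 0 (Set.Ioi 0)) (nhds 0) := by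
  obtain ⟨ha, ⟨B₀, hB₀⟩, ⟨r1, hr1, M1, hM1, hΦ⟩, ⟨r2, hr2, M2, hM2, hΨ⟩, -⟩ := hadm
  set B : ℝ := max B₀ 1 with hBdef
  set M : ℝ := max (max M1 M2) 1 with hMdef
  have hB1 : (1:ℝ) ≤ B := le_max_right _ _
  have hB0 : (0:ℝ) < B := lt_of_lt_of_le one_pos hB1
  have hM1' : (1:ℝ) ≤ M := le_max_right _ _
  have hM0 : (0:ℝ) < M := lt_of_lt_of_le one_pos hM1'
  set ε₀ : ℝ := min (min (min r1 r2) (1/(2*B))) (min (Real.exp (-(8*M))) (1/(8*M))) with hε₀def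
  have hε₀0 : 0 < ε₀ :=
    lt_min (lt_min (lt_min hr1 hr2) (by positivity)) (lt_min (Real.exp_pos _) (by positivity))
  have hε₀r1 : ε₀ ≤ r1 := le_trans (min_le_left _ _) (le_trans (min_le_left _ _) (min_le_left _ _))
  have hε₀r2 : ε₀ ≤ r2 := le_trans (min_le_left _ _) (le_trans (min_le_left _ _) (min_le_right _ _))
  have hε₀B : ε₀ ≤ 1/(2*B) := le_trans (min_le_left _ _) (min_le_right _ _)
  have hε₀exp : ε₀ ≤ Real.exp (-(8*M)) := le_trans (min_le_right _ _) (min_le_left _ _)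
  have hε₀M : ε₀ ≤ 1/(8*M) := le_trans (min_le_right _ _) (min_le_right _ _)
  have hε₀1 : ε₀ < 1 := by
    refine lt_of_le_of_lt hε₀exp ?_
    rw [Real.exp_lt_one_iff]
    nlinarith
  -- log bounds
  have hlog8M : ∀ x : ℝ, 0 < x → x < ε₀ → 8*M ≤ -Real.log x := by
    intro x hx hx'
    have h1 : Real.log x < Real.log (Real.exp (-(8*M))) :=
      Real.log_lt_log hx (lt_of_lt_of_le hx' hε₀exp)
    rw [Real.log_exp] at h1
    linarith
  have hlogneg : ∀ x : ℝ, 0 < x → x < ε₀ → Real.log x < 0 := by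
    intro x hx hx'
    have := hlog8M x hx hx'
    nlinarith
  have hLne : ∀ x : ℝ, 0 < x → x < ε₀ → Real.log x ≠ 0 :=
    fun x hx hx' => ne_of_lt (hlogneg x hx hx')
  -- bounds on phiR, psiR
  have hM1M : M1 ≤ M := le_trans (le_max_left _ _) (le_max_left _ _)
  have hM2M : M2 ≤ M := le_trans (le_max_right _ _) (le_max_left _ _)
  have hphiB : ∀ n : ℕ, 1 ≤ n → ∀ x : ℝ, 0 < x → x < ε₀ → |phiR c n x| ≤ M ^ n := by
    intro n hn x hx hx'
    have h := hΦ n hn (x:ℂ)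
      (by rw [Complex.norm_real, Real.norm_eq_abs, abs_of_pos hx]; linarith)
      (by simp)
    rw [Phi_real, Complex.norm_real, Real.norm_eq_abs] at h
    exact h.trans (pow_le_pow_left₀ hM1.le hM1M n)
  have hpsiB : ∀ n : ℕ, 1 ≤ n → ∀ x : ℝ, 0 < x → x < ε₀ → |psiR c n x| ≤ M ^ n := by
    intro n hn x hx hx'
    have h := hΨ n hn (x:ℂ)
      (by rw [Complex.norm_real, Real.norm_eq_abs, abs_of_pos hx]; linarith)
      (by simp)
    rw [PhiD_real, Complex.norm_real, Real.norm_eq_abs] at h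
    exact h.trans (pow_le_pow_left₀ hM2.le hM2M n)
  -- realness
  have heq : ∀ x : ℝ, 0 < x → x < ε₀ → fRep a c (x:ℂ) = ((RR a c x : ℝ) : ℂ) := by
    intro x hx hx'
    have hlog : Complex.log (x:ℂ) = ((Real.log x : ℝ):ℂ) := (Complex.ofReal_log hx.le).symm
    rw [fRep, hlog]
    have hsum : (∑' n : ℕ, Phi c (n+1) (x:ℂ) / ((Real.log x : ℝ):ℂ)^(n+1)) = ((SR c x : ℝ):ℂ) := by
      rw [SR, Complex.ofReal_tsum]
      exact tsum_congr fun n => by rw [Phi_real]; push_cast; ring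
    rw [hsum, RR]
    have hL : ((Real.log x : ℝ):ℂ) ≠ 0 := Complex.ofReal_ne_zero.mpr (hLne x hx hx')
    have ha' : ((a:ℝ):ℂ) ≠ 0 := Complex.ofReal_ne_zero.mpr (ne_of_gt ha)
    push_cast
    field_simp
  -- summable helpers
  have hgeom18 : Summable (fun n : ℕ => ((1:ℝ)/8)^(n+1)) := by
    have h := (summable_geometric_of_lt_one (by norm_num : (0:ℝ) ≤ 1/8) (by norm_num)).mul_left (1/8 : ℝ)
    exact h.congr (fun n => by rw [← pow_succ'])
  have hgeom14 : Summable (fun n : ℕ => ((1:ℝ)/4)^n) :=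
    summable_geometric_of_lt_one (by norm_num) (by norm_num)
  have hgeom8 : Summable (fun n : ℕ => ((1:ℝ)/8)^n) :=
    summable_geometric_of_lt_one (by norm_num) (by norm_num)
  have hkgeom : Summable (fun k : ℕ => 2*B*((k:ℝ)*(1/2)^k)) := by
    have h := summable_pow_mul_geometric_of_norm_lt_one (R := ℝ) 1
      (r := 1/2) (by rw [Real.norm_eq_abs, abs_of_pos (by norm_num : (0:ℝ) < 1/2)]; norm_num)
    exact (h.congr (fun n => by rw [pow_one])).mul_left (2*B)
  -- derivative of phiR
  have hDphi : ∀ n : ℕ, 1 ≤ n → ∀ x : ℝ, x ∈ Set.Ioo (-(1/(2*B))) (1/(2*B)) →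
      HasDerivAt (phiR c n) (psiR c n x) x := by
    intro n hn x hxm
    have hcb : ∀ k, 1 ≤ k → |c n k| ≤ B ^ k := fun k hk => coeff_le hB₀ hn hk
    have hbound : ∀ (k : ℕ) (y : ℝ), y ∈ Set.Ioo (-(1/(2*B))) (1/(2*B)) →
        ‖c n k * ((k:ℝ) * y ^ (k-1))‖ ≤ 2*B*((k:ℝ)*(1/2)^k) := by
      intro k y hy
      match k with
      | 0 => simp
      | (k+1) =>
        have hyb : |y| ≤ 1/(2*B) := by
          rw [abs_le]; exact ⟨hy.1.le, hy.2.le⟩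
        have h1 : ‖c n (k+1) * (((k:ℝ)+1) * y ^ k)‖ ≤ B^(k+1) * (((k:ℝ)+1) * (1/(2*B))^k) := by
          rw [Real.norm_eq_abs, abs_mul, abs_mul, _root_.abs_pow]
          have hck := hcb (k+1) (Nat.le_add_left 1 k)
          have h2 : |((k:ℝ)+1)| = (k:ℝ)+1 := abs_of_nonneg (by positivity)
          rw [h2]
          have hy0 : (0:ℝ) ≤ |y| := abs_nonneg _
          have h2B : (0:ℝ) < 1/(2*B) := by positivity
          refine mul_le_mul hck ?_ (by positivity) (by positivity)
          exact mul_le_mul le_rfl (pow_le_pow_left₀ hy0 hyb k) (by positivity) (by positivity)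
        have h3 : B^(k+1) * (((k:ℝ)+1) * (1/(2*B))^k) = 2*B*(((k:ℝ)+1)*(1/2)^(k+1)) := by
          have : ((1:ℝ)/(2*B))^k = (1/2)^k * (1/B)^k := by
            rw [← mul_pow]; congr 1; field_simp
          rw [this]
          have hBne : B ≠ 0 := ne_of_gt hB0
          field_simp
          have hk1 : B ^ k * B⁻¹ ^ k = 1 := by rw [← mul_pow, mul_inv_cancel₀ hBne, one_pow]
          linear_combination (B * (1/2)^k) * hk1
        rw [h3] at h1
        simpa using h1
    have key := hasDerivAt_tsum_of_isPreconnected hkgeom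
      (isOpen_Ioo (a := -(1/(2*B))) (b := 1/(2*B))) isPreconnected_Ioo
      (g := fun k y => c n k * y ^ k)
      (g' := fun k y => c n k * ((k:ℝ) * y ^ (k-1)))
      (fun k y _ => (hasDerivAt_pow k y).const_mul (c n k))
      hbound
      (y₀ := 0) (⟨neg_lt_zero.mpr (by positivity), by positivity⟩)
      (by
        apply summable_of_ne_finset_zero (s := ({0} : Finset ℕ))
        intro k hk
        have : k ≠ 0 := by simpa using hk
        simp [zero_pow this])
      hxm
    have hs' : Summable (fun k : ℕ => c n k * ((k:ℝ) * x ^ (k-1))) :=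
      Summable.of_norm_bounded hkgeom (fun k => hbound k x hxm)
    have hval : (∑' k : ℕ, c n k * ((k:ℝ) * x ^ (k-1))) = psiR c n x := by
      rw [Summable.tsum_eq_zero_add hs']
      simp only [Nat.cast_zero, zero_mul, mul_zero, zero_add]
      rw [psiR]
      exact tsum_congr fun k => by push_cast [Nat.add_sub_cancel]; ring
    rw [← hval]
    exact key
  -- numeric helpers
  have htri : ∀ A Bv : ℝ, |A - Bv| ≤ |A| + |Bv| := fun A Bv => by
    simpa [sub_eq_add_neg, abs_neg] using abs_add_le A (-Bv)
  have hpow8 : ∀ m : ℕ, M^m / (8*M)^m = ((1:ℝ)/8)^m := by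
    intro m
    rw [← div_pow]
    congr 1
    rw [div_eq_div_iff (by positivity : (8:ℝ)*M ≠ 0) (by norm_num : (8:ℝ) ≠ 0)]
    ring
  have hnp : ∀ n : ℕ, ((n:ℝ)+1)*((1:ℝ)/8)^(n+1) ≤ (1/8)*((1:ℝ)/4)^n := by
    intro n
    have h2 : ((n:ℝ)+1) ≤ 2^n := succ_le_two_pow n
    have h3 : (2:ℝ)^n * (1/8)^n = (1/4)^n := by rw [← mul_pow]; norm_num
    calc ((n:ℝ)+1)*((1:ℝ)/8)^(n+1) ≤ 2^n * ((1:ℝ)/8)^(n+1) :=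
          mul_le_mul_of_nonneg_right h2 (by positivity)
      _ = (1/8) * ((2:ℝ)^n * (1/8)^n) := by ring
      _ = (1/8)*((1:ℝ)/4)^n := by rw [h3]
  -- bound for terms of SR
  have hSterm : ∀ x : ℝ, 0 < x → x < ε₀ → ∀ n : ℕ,
      |phiR c (n+1) x / (Real.log x)^(n+1)| ≤ ((1:ℝ)/8)^(n+1) := by
    intro x hx hx' n
    have hL := hlog8M x hx hx'
    have hL0 : (0:ℝ) < -Real.log x := by nlinarith
    have hLabs : |Real.log x| = -Real.log x := abs_of_neg (hlogneg x hx hx')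
    rw [abs_div, _root_.abs_pow, hLabs]
    have h1 := hphiB (n+1) (Nat.le_add_left 1 n) x hx hx'
    have h2 : (8*M)^(n+1) ≤ (-Real.log x)^(n+1) := pow_le_pow_left₀ (by positivity) hL (n+1)
    calc |phiR c (n+1) x| / (-Real.log x)^(n+1) ≤ M^(n+1) / (8*M)^(n+1) :=
          div_le_div₀ (by positivity) h1 (by positivity) h2
      _ = ((1:ℝ)/8)^(n+1) := hpow8 (n+1)
  have hSsummand : ∀ x : ℝ, 0 < x → x < ε₀ →
      Summable (fun n : ℕ => phiR c (n+1) x / (Real.log x)^(n+1)) := by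
    intro x hx hx'
    exact Summable.of_norm_bounded hgeom18 (fun n => by
      rw [Real.norm_eq_abs]; exact hSterm x hx hx' n)
  have hSb : ∀ x : ℝ, 0 < x → x < ε₀ → |SR c x| ≤ 1/7 := by
    intro x hx hx'
    have h := abs_tsum_le (f := fun n => phiR c (n+1) x / (Real.log x)^(n+1))
      (hSterm x hx hx') hgeom18
    rw [SR]
    refine h.trans ?_
    have hev : ∑' n : ℕ, ((1:ℝ)/8)^(n+1) = 1/7 := by
      have h1 : ∑' n : ℕ, ((1:ℝ)/8)^(n+1) = (1/8) * ∑' n : ℕ, ((1:ℝ)/8)^n := by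
        rw [← tsum_mul_left]
        exact tsum_congr fun n => by rw [← pow_succ']
      rw [h1, tsum_geometric_of_lt_one (by norm_num) (by norm_num)]
      norm_num
    rw [hev]
  -- core : derivative of RR is positive
  have hcore : ∀ x : ℝ, 0 < x → x < ε₀ → ∃ D : ℝ, HasDerivAt (RR a c) D x ∧ 0 < D := by
    intro x hx hx'
    have hLneg : Real.log x < 0 := hlogneg x hx hx'
    have hL8 : 8*M ≤ -Real.log x := hlog8M x hx hx'
    have hL0 : (0:ℝ) < -Real.log x := by nlinarith
    set t : Set ℝ := Set.Ioo (x/2) ε₀ with htdef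
    have hxt : x ∈ t := ⟨by linarith, hx'⟩
    set g' : ℕ → ℝ → ℝ := fun n y =>
      (psiR c (n+1) y * (Real.log y)^(n+1) -
        phiR c (n+1) y * ((((n+1:ℕ)):ℝ) * Real.log y ^ n * y⁻¹)) / ((Real.log y)^(n+1))^2
      with hg'def
    have hsplit : ∀ (n : ℕ) (y : ℝ), 0 < y → y < ε₀ → g' n y =
        psiR c (n+1) y / (Real.log y)^(n+1)
          - (((n+1:ℕ)):ℝ) * phiR c (n+1) y / (y * (Real.log y)^(n+2)) := by
      intro n y hy0 hy'
      rw [hg'def]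
      have h1 : Real.log y ≠ 0 := hLne y hy0 hy'
      have h2 : y ≠ 0 := ne_of_gt hy0
      field_simp
      ring
    have hgderiv : ∀ (n : ℕ) (y : ℝ), y ∈ t →
        HasDerivAt (fun z => phiR c (n+1) z / (Real.log z)^(n+1)) (g' n y) y := by
      intro n y hy
      have hy0 : 0 < y := lt_trans (by linarith : (0:ℝ) < x/2) hy.1
      have hy' : y < ε₀ := hy.2
      have hyIoo : y ∈ Set.Ioo (-(1/(2*B))) (1/(2*B)) := by
        constructor
        · have : (0:ℝ) < 1/(2*B) := by positivity
          linarith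
        · exact lt_of_lt_of_le hy' hε₀B
      have hnum := hDphi (n+1) (Nat.le_add_left 1 n) y hyIoo
      have hlogD : HasDerivAt Real.log y⁻¹ y := Real.hasDerivAt_log (ne_of_gt hy0)
      have hden := (hasDerivAt_pow (n+1) (Real.log y)).comp y hlogD
      have hdne : (Real.log y)^(n+1) ≠ 0 := pow_ne_zero _ (hLne y hy0 hy')
      have h := hnum.div hden hdne
      rw [hg'def]
      simp only [Nat.add_sub_cancel] at h
      exact h
    have hg'pt : ∀ (n : ℕ) (y : ℝ), 0 < y → y < ε₀ →
        |g' n y| ≤ (M*((1:ℝ)/8)^n) / (-Real.log y)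
          + (y⁻¹*((1/8)*((1:ℝ)/4)^n)) / (-Real.log y) := by
      intro n y hy0 hy'
      have hyL : 8*M ≤ -Real.log y := hlog8M y hy0 hy'
      have hyLneg : Real.log y < 0 := hlogneg y hy0 hy'
      have hyL0 : (0:ℝ) < -Real.log y := by linarith
      rw [hsplit n y hy0 hy']
      refine (htri _ _).trans (add_le_add ?_ ?_)
      · rw [abs_div, _root_.abs_pow, abs_of_neg hyLneg]
        have h1 := hpsiB (n+1) (Nat.le_add_left 1 n) y hy0 hy'
        have h2 : (-Real.log y) * (8*M)^n ≤ (-Real.log y)^(n+1) := by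
          rw [pow_succ']
          exact mul_le_mul_of_nonneg_left (pow_le_pow_left₀ (by positivity) hyL n) hyL0.le
        calc |psiR c (n+1) y| / (-Real.log y)^(n+1)
            ≤ M^(n+1) / ((-Real.log y) * (8*M)^n) :=
              div_le_div₀ (by positivity) h1 (by positivity) h2
          _ = (M^(n+1)/(8*M)^n) / (-Real.log y) := by ring
          _ = (M*((1:ℝ)/8)^n) / (-Real.log y) := by
              congr 1
              rw [← hpow8 n, pow_succ']
              ring
      · rw [abs_div, abs_mul, abs_mul, _root_.abs_pow, abs_of_neg hyLneg, abs_of_pos hy0]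
        have hphi := hphiB (n+1) (Nat.le_add_left 1 n) y hy0 hy'
        have hnabs : |(((n+1:ℕ)):ℝ)| = (n:ℝ)+1 := by
          push_cast
          exact abs_of_nonneg (by positivity)
        rw [hnabs]
        have h2 : y * ((-Real.log y) * (8*M)^(n+1)) ≤ y * (-Real.log y)^(n+2) := by
          refine mul_le_mul_of_nonneg_left ?_ hy0.le
          have e : (-Real.log y)^(n+2) = (-Real.log y) * (-Real.log y)^(n+1) :=
            pow_succ' (-Real.log y) (n+1)
          rw [e]
          exact mul_le_mul_of_nonneg_left (pow_le_pow_left₀ (by positivity) hyL (n+1)) hyL0.le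
        calc ((n:ℝ)+1) * |phiR c (n+1) y| / (y * (-Real.log y)^(n+2))
            ≤ ((n:ℝ)+1) * M^(n+1) / (y * ((-Real.log y) * (8*M)^(n+1))) :=
              div_le_div₀ (by positivity)
                (mul_le_mul_of_nonneg_left hphi (by positivity)) (by positivity) h2
          _ = (y⁻¹ * (((n:ℝ)+1) * (M^(n+1)/(8*M)^(n+1)))) / (-Real.log y) := by
              rw [div_eq_div_iff (by positivity) hyL0.ne']
              field_simp
          _ = (y⁻¹ * (((n:ℝ)+1) * ((1:ℝ)/8)^(n+1))) / (-Real.log y) := by rw [hpow8]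
          _ ≤ (y⁻¹*((1/8)*((1:ℝ)/4)^n)) / (-Real.log y) := by
              refine (div_le_div_iff_of_pos_right hyL0).mpr ?_
              exact mul_le_mul_of_nonneg_left (hnp n) (by positivity)
    -- uniform bound on t
    have hg'bound : ∀ (n : ℕ) (y : ℝ), y ∈ t →
        ‖g' n y‖ ≤ (M*((1:ℝ)/8)^n) / (8*M) + ((2/x) * ((1/8)*((1:ℝ)/4)^n)) / (8*M) := by
      intro n y hy
      have hy0 : 0 < y := lt_trans (by linarith : (0:ℝ) < x/2) hy.1
      have hy' : y < ε₀ := hy.2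
      have hyinv : y⁻¹ ≤ 2/x := by
        have h1 : y⁻¹ ≤ (x/2)⁻¹ := inv_anti₀ (by positivity) hy.1.le
        rwa [inv_div] at h1
      rw [Real.norm_eq_abs]
      refine (hg'pt n y hy0 hy').trans (add_le_add ?_ ?_)
      · exact div_le_div₀ (by positivity) le_rfl (by positivity) (hlog8M y hy0 hy')
      · exact div_le_div₀ (by positivity)
          (mul_le_mul_of_nonneg_right hyinv (by positivity)) (by positivity)
          (hlog8M y hy0 hy')
    have hu : Summable (fun n : ℕ =>
        (M*((1:ℝ)/8)^n) / (8*M) + ((2/x) * ((1/8)*((1:ℝ)/4)^n)) / (8*M)) :=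
      ((hgeom8.mul_left M).div_const (8*M)).add
        (((hgeom14.mul_left (1/8)).mul_left (2/x)).div_const (8*M))
    have key := hasDerivAt_tsum_of_isPreconnected hu isOpen_Ioo isPreconnected_Ioo
      hgderiv hg'bound hxt (hSsummand x hx hx') hxt
    have hSd : HasDerivAt (SR c) (∑' n, g' n x) x := key
    -- bound for the derivative of SR
    have hterm : ∀ n : ℕ, |g' n x| ≤
        ((M*((1:ℝ)/8)^n) + x⁻¹*((1/8)*((1:ℝ)/4)^n)) / (-Real.log x) := by
      intro n
      refine (hg'pt n x hx hx').trans ?_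
      rw [← add_div]
    have hsumW : Summable (fun n : ℕ =>
        ((M*((1:ℝ)/8)^n) + x⁻¹*((1/8)*((1:ℝ)/4)^n)) / (-Real.log x)) :=
      ((hgeom8.mul_left M).add ((hgeom14.mul_left (1/8)).mul_left x⁻¹)).div_const _
    have hWval : (∑' n : ℕ, ((M*((1:ℝ)/8)^n) + x⁻¹*((1/8)*((1:ℝ)/4)^n)))
        = M*(8/7) + x⁻¹*(1/6) := by
      rw [Summable.tsum_add (hgeom8.mul_left M) ((hgeom14.mul_left (1/8)).mul_left x⁻¹),
        tsum_mul_left, tsum_mul_left, tsum_mul_left,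
        tsum_geometric_of_lt_one (by norm_num) (by norm_num),
        tsum_geometric_of_lt_one (by norm_num) (by norm_num)]
      norm_num
    have hS'abs : |∑' n : ℕ, g' n x| ≤ (M*(8/7) + x⁻¹*(1/6)) / (-Real.log x) := by
      refine (abs_tsum_le hterm hsumW).trans ?_
      rw [tsum_div_const, hWval]
    have hS'mul : |(∑' n : ℕ, g' n x) * (-Real.log x)| ≤ M*(8/7) + x⁻¹*(1/6) := by
      rw [abs_mul, abs_of_pos hL0]
      exact (le_div_iff₀ hL0).mp hS'abs
    -- assemble the derivative of RR
    have hone : HasDerivAt (fun y => 1 + SR c y) (∑' n : ℕ, g' n x) x := hSd.const_add 1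
    have hnegl : HasDerivAt (fun y : ℝ => -Real.log y) (-x⁻¹) x :=
      (Real.hasDerivAt_log (ne_of_gt hx)).neg
    have hdiv := hone.div hnegl (ne_of_gt hL0)
    have hfin := hdiv.const_mul (2*Real.pi/a)
    refine ⟨_, hfin, ?_⟩
    have hS := hSb x hx hx'
    have hSlo := (abs_le.mp hS).1
    have hxinv : 8*M ≤ x⁻¹ := by
      have hxM : x ≤ 1/(8*M) := le_of_lt (lt_of_lt_of_le hx' hε₀M)
      rw [← one_div, le_div_iff₀ hx]
      calc 8*M*x ≤ 8*M*(1/(8*M)) := mul_le_mul_of_nonneg_left hxM (by positivity)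
        _ = 1 := by field_simp
    have hxinv0 : (0:ℝ) < x⁻¹ := by positivity
    have hnum : 0 < (∑' n : ℕ, g' n x) * (-Real.log x) - (1 + SR c x) * (-x⁻¹) := by
      have h1 : -(M*(8/7) + x⁻¹*(1/6)) ≤ (∑' n : ℕ, g' n x) * (-Real.log x) := by
        have h2 := neg_abs_le ((∑' n : ℕ, g' n x) * (-Real.log x))
        linarith [hS'mul]
      nlinarith [mul_nonneg (by linarith : (0:ℝ) ≤ SR c x + 1/7) (le_of_lt hxinv0)]
    have hpos2π : (0:ℝ) < 2*Real.pi/a := by positivity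
    exact mul_pos hpos2π (div_pos hnum (pow_pos hL0 2))
  -- monotonicity and continuity of RR
  have hmono : StrictMonoOn (RR a c) (Set.Ioo 0 ε₀) := by
    refine strictMonoOn_of_deriv_pos (convex_Ioo _ _) ?_ ?_
    · intro y hy
      obtain ⟨D, hD, -⟩ := hcore y hy.1 hy.2
      exact hD.continuousAt.continuousWithinAt
    · intro y hy
      rw [interior_Ioo] at hy
      obtain ⟨D, hD, hDpos⟩ := hcore y hy.1 hy.2
      rw [hD.deriv]
      exact hDpos
  have hcont : ContinuousOn (RR a c) (Set.Ioo 0 ε₀) := by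
    intro y hy
    obtain ⟨D, hD, -⟩ := hcore y hy.1 hy.2
    exact hD.continuousAt.continuousWithinAt
  have hRRpos : ∀ x : ℝ, 0 < x → x < ε₀ → 0 < RR a c x := by
    intro x hx hx'
    have hS := (abs_le.mp (hSb x hx hx')).1
    have hL0 : (0:ℝ) < -Real.log x := by nlinarith [hlog8M x hx hx', hM0]
    rw [RR]
    have h1 : (0:ℝ) < 1 + SR c x := by linarith
    exact mul_pos (by positivity) (div_pos h1 hL0)
  -- tendsto 0
  have htend : Tendsto (fun x : ℝ => fRep a c (x:ℂ)) (𝓝[>] (0:ℝ)) (𝓝 0) := by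
    have hev : ∀ᶠ x : ℝ in 𝓝[>] (0:ℝ),
        ‖fRep a c (x:ℂ)‖ ≤ (2*Real.pi/a) * (8/7) * (-Real.log x)⁻¹ := by
      filter_upwards [Ioo_mem_nhdsGT hε₀0] with x hx
      have hx0 := hx.1
      have hx' := hx.2
      have hL0 : (0:ℝ) < -Real.log x := by nlinarith [hlog8M x hx0 hx', hM0]
      have hS := abs_le.mp (hSb x hx0 hx')
      have h17 : |1 + SR c x| ≤ 8/7 := abs_le.mpr ⟨by linarith [hS.1], by linarith [hS.2]⟩
      rw [heq x hx0 hx', Complex.norm_real, Real.norm_eq_abs, RR, abs_mul,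
        abs_of_pos (by positivity : (0:ℝ) < 2*Real.pi/a), abs_div, abs_of_pos hL0]
      calc (2*Real.pi/a) * (|1 + SR c x|/(-Real.log x))
          ≤ (2*Real.pi/a) * ((8/7)/(-Real.log x)) := by
            exact mul_le_mul_of_nonneg_left
              (div_le_div₀ (by norm_num) h17 hL0 le_rfl) (by positivity)
        _ = (2*Real.pi/a) * (8/7) * (-Real.log x)⁻¹ := by
            rw [div_eq_mul_inv]; ring
    have hlim : Tendsto (fun x : ℝ => (2*Real.pi/a) * (8/7) * (-Real.log x)⁻¹)
        (𝓝[>] (0:ℝ)) (𝓝 0) := by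
      have h1 : Tendsto (fun x : ℝ => -Real.log x) (𝓝[>] (0:ℝ)) atTop :=
        tendsto_neg_atBot_atTop.comp Real.tendsto_log_nhdsGT_zero
      have h2 : Tendsto (fun x : ℝ => (-Real.log x)⁻¹) (𝓝[>] (0:ℝ)) (𝓝 0) :=
        tendsto_inv_atTop_zero.comp h1
      have h3 := h2.const_mul ((2*Real.pi/a) * (8/7))
      simpa [mul_assoc, mul_comm, mul_left_comm] using h3
    exact squeeze_zero_norm' hev hlim
  -- final assembly
  refine ⟨ε₀/2, by positivity, ?_, ?_, ?_, htend⟩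
  · intro x hx
    have hx' : x < ε₀ := by
      have := hx.2
      linarith [hε₀0]
    rw [heq x hx.1 hx']
    exact Complex.ofReal_im _
  · intro x hx y hy hxy
    have hx' : x < ε₀ := by have := hx.2; linarith [hε₀0]
    have hy' : y < ε₀ := by have := hy.2; linarith [hε₀0]
    show (fRep a c (x:ℂ)).re < (fRep a c (y:ℂ)).re
    rw [heq x hx.1 hx', heq y hy.1 hy', Complex.ofReal_re, Complex.ofReal_re]
    exact hmono ⟨hx.1, hx'⟩ ⟨hy.1, hy'⟩ hxy
  · have hhalf : ε₀/2 ∈ Set.Ioo (0:ℝ) ε₀ := ⟨by positivity, by linarith [hε₀0]⟩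
    refine ⟨RR a c (ε₀/2), hRRpos _ hhalf.1 hhalf.2, ?_, ?_, ?_⟩
    · intro x hx
      have hx' : x < ε₀ := by have := hx.2; linarith [hε₀0]
      have h1 : 0 < RR a c x := hRRpos x hx.1 hx'
      have h2 : RR a c x < RR a c (ε₀/2) := hmono ⟨hx.1, hx'⟩ hhalf hx.2
      show (fRep a c (x:ℂ)).re ∈ Set.Ioo (0:ℝ) (RR a c (ε₀/2))
      rw [heq x hx.1 hx', Complex.ofReal_re]
      exact ⟨h1, h2⟩
    · intro x hx y hy hxy
      have hx' : x < ε₀ := by have := hx.2; linarith [hε₀0]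
      have hy' : y < ε₀ := by have := hy.2; linarith [hε₀0]
      have e : RR a c x = RR a c y := by
        have hxx : (fRep a c (x:ℂ)).re = (fRep a c (y:ℂ)).re := hxy
        rw [heq x hx.1 hx', heq y hy.1 hy', Complex.ofReal_re, Complex.ofReal_re] at hxx
        exact hxx
      exact hmono.injOn ⟨hx.1, hx'⟩ ⟨hy.1, hy'⟩ e
    · intro y hy
      have htendR : Tendsto (RR a c) (𝓝[>] (0:ℝ)) (𝓝 0) := by
        have h1 : Tendsto (fun x : ℝ => (fRep a c (x:ℂ)).re) (𝓝[>] (0:ℝ)) (𝓝 0) := by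
          have h2 := (Complex.continuous_re.tendsto 0).comp htend
          simpa [Function.comp_def] using h2
        refine h1.congr' ?_
        filter_upwards [Ioo_mem_nhdsGT hε₀0] with x hx
        rw [heq x hx.1 hx.2, Complex.ofReal_re]
      have hev2 : ∀ᶠ x : ℝ in 𝓝[>] (0:ℝ), RR a c x < y :=
        htendR.eventually_lt_const hy.1
      obtain ⟨tt, htlt, htmem⟩ :=
        (hev2.and (Ioo_mem_nhdsGT (by positivity : (0:ℝ) < ε₀/2))).exists
      have hsub : Set.Icc tt (ε₀/2) ⊆ Set.Ioo 0 ε₀ := by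
        intro z hz
        exact ⟨lt_of_lt_of_le htmem.1 hz.1, lt_of_le_of_lt hz.2 (by linarith [hε₀0])⟩
      have hivt := intermediate_value_Ioo (le_of_lt htmem.2) (hcont.mono hsub)
      obtain ⟨z, hz, hzeq⟩ := hivt ⟨htlt, hy.2⟩
      refine ⟨z, ⟨lt_trans htmem.1 hz.1, hz.2⟩, ?_⟩
      have hz' : z < ε₀ := by have := hz.2; linarith [hε₀0]
      show (fRep a c (z:ℂ)).re = y
      rw [heq z (lt_trans htmem.1 hz.1) hz', Complex.ofReal_re]
      exact hzeq
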